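/- Let v ∈ ℝ^n, α > 0 and γ ∈ (0,1). For any w ∈ ℝ^n satisfying ‖v − w‖₂ < γ‖D(v)‖₂ / (5√n), one has CLCD_{α/2, γ/2}(w) ≥ min{ CLCD_{α,γ}(v), α / (4√n ‖v − w‖₂) }. -/

import Mathlib

open Real

noncomputable section

/-- Euclidean norm of a finitely indexed real vector. -/
def pnorm {ι : Type*} [Fintype ι] (x : ι → ℝ) : ℝ := Real.sqrt (∑ i, x i ^ 2)

/-- Index type for the coordinates of `D(v)`: pairs `(i, j)` with `i < j`. -/
abbrev PairIdx (n : ℕ) := {p : Fin n × Fin n // p.1 < p.2}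

/-- `D(v)`: the vector in `ℝ^{n(n-1)/2}` whose `(i,j)`-coordinate is `v i - v j`
for `i < j`. -/
def Dvec {n : ℕ} (v : Fin n → ℝ) : PairIdx n → ℝ := fun p => v p.1.1 - v p.1.2

/-- Euclidean distance from a vector to the integer lattice. -/
def latDist {ι : Type*} [Fintype ι] (x : ι → ℝ) : ℝ :=
  ⨅ m : ι → ℤ, pnorm (fun i => x i - (m i : ℝ))

/-- The combinatorial least common denominator
`CLCD_{α,γ}(v) = inf {θ > 0 : dist(θ D(v), ℤ^{n(n-1)/2}) < min(γ ‖θ D(v)‖₂, α)}`,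
as an extended nonnegative real (`∞` if no such `θ` exists). -/
def CLCD (n : ℕ) (α γ : ℝ) (v : Fin n → ℝ) : ENNReal :=
  sInf {θ : ENNReal | ∃ t : ℝ, 0 < t ∧ θ = ENNReal.ofReal t ∧
    latDist (fun p => t * Dvec v p) < min (γ * pnorm (fun p => t * Dvec v p)) α}


lemma pnorm_eq {ι : Type*} [Fintype ι] (x : ι → ℝ) :
    pnorm x = ‖(WithLp.equiv 2 (ι → ℝ)).symm x‖ := by
  rw [EuclideanSpace.norm_eq]
  simp [pnorm, sq_abs]

lemma pnorm_nonneg {ι : Type*} [Fintype ι] (x : ι → ℝ) : 0 ≤ pnorm x :=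
  Real.sqrt_nonneg _

lemma pnorm_add_le {ι : Type*} [Fintype ι] (x y : ι → ℝ) :
    pnorm (fun i => x i + y i) ≤ pnorm x + pnorm y := by
  rw [pnorm_eq, pnorm_eq, pnorm_eq]
  exact norm_add_le ((WithLp.equiv 2 (ι → ℝ)).symm x) ((WithLp.equiv 2 (ι → ℝ)).symm y)

lemma pnorm_smul {ι : Type*} [Fintype ι] (c : ℝ) (x : ι → ℝ) :
    pnorm (fun i => c * x i) = |c| * pnorm x := by
  rw [pnorm_eq, pnorm_eq]
  have : (WithLp.equiv 2 (ι → ℝ)).symm (fun i => c * x i)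
      = c • (WithLp.equiv 2 (ι → ℝ)).symm x := rfl
  rw [this, norm_smul, Real.norm_eq_abs]

lemma latDist_bdd {ι : Type*} [Fintype ι] (x : ι → ℝ) :
    BddBelow (Set.range fun m : ι → ℤ => pnorm (fun i => x i - (m i : ℝ))) :=
  ⟨0, by rintro _ ⟨m, rfl⟩; exact pnorm_nonneg _⟩

lemma latDist_le {ι : Type*} [Fintype ι] (x : ι → ℝ) (m : ι → ℤ) :
    latDist x ≤ pnorm (fun i => x i - (m i : ℝ)) :=
  ciInf_le (latDist_bdd x) m

lemma latDist_le_add {ι : Type*} [Fintype ι] (x y : ι → ℝ) :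
    latDist x ≤ latDist y + pnorm (fun i => x i - y i) := by
  have key : ∀ m : ι → ℤ, latDist x - pnorm (fun i => x i - y i)
      ≤ pnorm (fun i => y i - (m i : ℝ)) := by
    intro m
    have h1 := latDist_le x m
    have h2 : pnorm (fun i => x i - (m i : ℝ))
        ≤ pnorm (fun i => y i - (m i : ℝ)) + pnorm (fun i => x i - y i) := by
      have e : (fun i => x i - (m i : ℝ)) = fun i => (y i - (m i : ℝ)) + (x i - y i) := by
        funext i; ring
      rw [e]; exact pnorm_add_le _ _
    linarith
  have h3 : latDist x - pnorm (fun i => x i - y i) ≤ latDist y := le_ciInf key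
  linarith

lemma sum_pair_le {n : ℕ} (u : Fin n → ℝ) :
    ∑ p : PairIdx n, (Dvec u p) ^ 2 ≤ n * ∑ i, u i ^ 2 := by
  set f : Fin n × Fin n → ℝ := fun q => (u q.1 - u q.2) ^ 2 with hf
  have h1 : ∑ p : PairIdx n, (Dvec u p) ^ 2
      = ∑ q ∈ Finset.univ.filter (fun q : Fin n × Fin n => q.1 < q.2), f q := by
    have := Finset.sum_subtype (F := (inferInstance : Fintype (PairIdx n)))
      (p := fun q : Fin n × Fin n => q.1 < q.2)
      (Finset.univ.filter (fun q : Fin n × Fin n => q.1 < q.2)) (by simp) f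
    exact this.symm
  have h2 : ∑ q ∈ Finset.univ.filter (fun q : Fin n × Fin n => q.1 < q.2), f q
      = ∑ q ∈ Finset.univ.filter (fun q : Fin n × Fin n => q.2 < q.1), f q := by
    refine Finset.sum_nbij' (fun q => q.swap) (fun q => q.swap) ?_ ?_ ?_ ?_ ?_
    · intro a ha; simp only [Finset.mem_filter, Finset.mem_univ, true_and] at ha ⊢
      simpa using ha
    · intro a ha; simp only [Finset.mem_filter, Finset.mem_univ, true_and] at ha ⊢
      simpa using ha
    · intro a _; simp
    · intro a _; simp
    · intro a _; simp [hf]; ring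
  have h3 : ∑ q ∈ Finset.univ.filter (fun q : Fin n × Fin n => q.2 < q.1), f q
      ≤ ∑ q ∈ Finset.univ.filter (fun q : Fin n × Fin n => ¬ q.1 < q.2), f q := by
    apply Finset.sum_le_sum_of_subset_of_nonneg
    · intro q hq
      simp only [Finset.mem_filter, Finset.mem_univ, true_and] at hq ⊢
      exact not_lt_of_gt hq
    · intros; exact sq_nonneg _
  have h4 : ∑ q ∈ Finset.univ.filter (fun q : Fin n × Fin n => q.1 < q.2), f q
      + ∑ q ∈ Finset.univ.filter (fun q : Fin n × Fin n => ¬ q.1 < q.2), f q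
      = ∑ q : Fin n × Fin n, f q :=
    Finset.sum_filter_add_sum_filter_not _ _ _
  have e : ∀ i : Fin n, ∑ j, f (i, j)
      = n * u i ^ 2 - (2 * u i) * (∑ j, u j) + ∑ j, u j ^ 2 := by
    intro i
    calc ∑ j, f (i, j) = ∑ j, (u i ^ 2 - (2 * u i) * u j + u j ^ 2) :=
          Finset.sum_congr rfl fun j _ => by simp only [hf]; ring
      _ = _ := by
          rw [Finset.sum_add_distrib, Finset.sum_sub_distrib, Finset.sum_const,
            Finset.card_univ, Fintype.card_fin, nsmul_eq_mul, ← Finset.mul_sum]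
  have hA2 : ∑ i, ((2 * u i) * (∑ j, u j)) = 2 * (∑ j, u j) ^ 2 := by
    rw [← Finset.sum_mul, ← Finset.mul_sum]; ring
  have hn : ∑ i : Fin n, (n : ℝ) * u i ^ 2 = n * ∑ i, u i ^ 2 :=
    (Finset.mul_sum _ _ _).symm
  have h5 : ∑ q : Fin n × Fin n, f q
      = 2 * (n * ∑ i, u i ^ 2) - 2 * (∑ i, u i) ^ 2 := by
    rw [Fintype.sum_prod_type, Finset.sum_congr rfl fun i _ => e i,
      Finset.sum_add_distrib, Finset.sum_sub_distrib, hn, hA2, Finset.sum_const,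
      Finset.card_univ, Fintype.card_fin, nsmul_eq_mul]
    ring
  nlinarith [sq_nonneg (∑ i, u i)]

lemma pnorm_Dvec_le {n : ℕ} (u : Fin n → ℝ) :
    pnorm (Dvec u) ≤ Real.sqrt n * pnorm u := by
  rw [pnorm, pnorm, ← Real.sqrt_mul (by positivity : (0:ℝ) ≤ (n:ℝ))]
  exact Real.sqrt_le_sqrt (sum_pair_le u)

lemma pnorm_sub_le {ι : Type*} [Fintype ι] (x y : ι → ℝ) :
    pnorm x ≤ pnorm y + pnorm (fun i => x i - y i) := by
  have e : x = fun i => y i + (x i - y i) := by funext i; ring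
  calc pnorm x = pnorm (fun i => y i + (x i - y i)) := by rw [← e]
    _ ≤ _ := pnorm_add_le _ _

/-- stability of the CLCD: for `v ∈ ℝ^n`, `α > 0`, `γ ∈ (0,1)` and any
`w ∈ ℝ^n` with `‖v − w‖₂ < γ‖D(v)‖₂/(5√n)`, one has
`CLCD_{α/2, γ/2}(w) ≥ min (CLCD_{α,γ}(v)) (α / (4√n ‖v − w‖₂))`. -/
theorem stmt10 {n : ℕ} (v w : Fin n → ℝ) (α γ : ℝ) (hα : 0 < α) (hγ : 0 < γ) (hγ1 : γ < 1)
    (hvw : pnorm (fun i => v i - w i) < γ * pnorm (Dvec v) / (5 * Real.sqrt n)) :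
    min (CLCD n α γ v)
        (ENNReal.ofReal α / ENNReal.ofReal (4 * Real.sqrt n * pnorm (fun i => v i - w i))) ≤
      CLCD n (α / 2) (γ / 2) w := by
  set ε := pnorm (fun i => v i - w i) with hε
  have hε0 : 0 ≤ ε := pnorm_nonneg _
  set Dv := pnorm (Dvec v) with hDv
  set Dw := pnorm (Dvec w) with hDw
  have hDv0 : 0 ≤ Dv := pnorm_nonneg _
  have hDw0 : 0 ≤ Dw := pnorm_nonneg _
  rcases eq_or_ne n 0 with rfl | hn
  · exfalso
    rw [Nat.cast_zero, Real.sqrt_zero, mul_zero, div_zero] at hvw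
    linarith
  have hsn : (0:ℝ) < Real.sqrt n :=
    Real.sqrt_pos.mpr (by exact_mod_cast Nat.pos_of_ne_zero hn)
  have hs : Real.sqrt n * ε < γ * Dv / 5 := by
    have h := mul_lt_mul_of_pos_left hvw hsn
    calc Real.sqrt n * ε < Real.sqrt n * (γ * Dv / (5 * Real.sqrt n)) := h
      _ = γ * Dv / 5 := by field_simp
  -- the distance between Dvec v and Dvec w
  have hd : pnorm (Dvec (fun i => v i - w i)) ≤ Real.sqrt n * ε :=
    pnorm_Dvec_le _
  set d := pnorm (Dvec (fun i => v i - w i)) with hdd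
  have hd0 : 0 ≤ d := pnorm_nonneg _
  have hDwv : Dw ≤ Dv + d := by
    have := pnorm_sub_le (Dvec w) (Dvec v)
    have e : (fun p => Dvec w p - Dvec v p)
        = fun p => (-1) * Dvec (fun i => v i - w i) p := by
      funext p; simp [Dvec]; ring
    rw [e, pnorm_smul] at this
    simpa using this
  clear_value ε Dv Dw d
  refine le_sInf ?_
  rintro θ ⟨t, ht, rfl, hcond⟩
  by_cases hcase : ENNReal.ofReal α / ENNReal.ofReal (4 * Real.sqrt n * ε) ≤ ENNReal.ofReal t
  · exact le_trans (min_le_right _ _) hcase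
  · push_neg at hcase
    -- derive t * (√n * ε) < α / 4
    have htε : t * (Real.sqrt n * ε) < α / 4 := by
      rcases eq_or_lt_of_le hε0 with hε0' | hε0'
      · rw [← hε0', mul_zero, mul_zero]; linarith
      · have hc : (0:ℝ) < 4 * Real.sqrt n * ε := by positivity
        rw [ENNReal.lt_div_iff_mul_lt (Or.inl (ENNReal.ofReal_pos.mpr hc).ne')
          (Or.inl ENNReal.ofReal_ne_top)] at hcase
        rw [← ENNReal.ofReal_mul ht.le] at hcase
        have := (ENNReal.ofReal_lt_ofReal_iff hα).mp hcase
        nlinarith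
    refine le_trans (min_le_left _ _) (sInf_le ⟨t, ht, rfl, ?_⟩)
    -- unpack hcond
    rw [lt_min_iff] at hcond ⊢
    obtain ⟨hc1, hc2⟩ := hcond
    rw [pnorm_smul, abs_of_pos ht, ← hDw] at hc1
    rw [pnorm_smul, abs_of_pos ht, ← hDv]
    -- Lipschitz step
    have hlip : latDist (fun p => t * Dvec v p)
        ≤ latDist (fun p => t * Dvec w p) + t * d := by
      have h := latDist_le_add (fun p => t * Dvec v p) (fun p => t * Dvec w p)
      have e : (fun p => t * Dvec v p - t * Dvec w p)
          = fun p => t * Dvec (fun i => v i - w i) p := by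
        funext p; simp [Dvec]; ring
      rw [e, pnorm_smul, abs_of_pos ht, ← hdd] at h
      exact h
    have htd : t * d ≤ t * (Real.sqrt n * ε) := by nlinarith
    constructor
    · -- γ part
      have h1 : latDist (fun p => t * Dvec v p) < γ / 2 * (t * Dw) + t * d := by linarith
      have h2 : γ / 2 * (t * Dw) ≤ γ / 2 * (t * (Dv + d)) := by
        have := mul_le_mul_of_nonneg_left
          (mul_le_mul_of_nonneg_left hDwv ht.le) (by positivity : (0:ℝ) ≤ γ / 2)
        linarith
      have hexp : γ / 2 * (t * (Dv + d)) = γ * (t * Dv) / 2 + γ / 2 * (t * d) := by ring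
      have h4 : γ / 2 * (t * d) ≤ (1 / 2) * (t * d) := by
        nlinarith [mul_nonneg ht.le hd0]
      have h5 : t * d < γ * (t * Dv) / 5 := by
        calc t * d ≤ t * (Real.sqrt n * ε) := htd
          _ < t * (γ * Dv / 5) := by exact mul_lt_mul_of_pos_left hs ht
          _ = γ * (t * Dv) / 5 := by ring
      have hP0 : 0 ≤ γ * (t * Dv) := by positivity
      linarith
    · -- α part
      linarith
end
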